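/- arXiv:1302.3634 — 7 statements merged into one kernel-verified Lean document; each statement's English description precedes it below -/
import Mathlib

section
/- Let V be a finite-dimensional real vector space, J : V → V a linear map with J ∘ J = -id, and g a nondegenerate symmetric bilinear form with g(JX, JY) = g(X, Y) for all X, Y (the indefinite Hermitian compatibility). Let H ⊆ V be a hyperplane whose radical Rad_g H = H ∩ H^⊥ᵍ is nonzero, spanned by a vector ξ. Then Jξ ∈ H and Jξ ∉ span{ξ}; consequently J(Rad_g H) is a one-dimensional subspace contained in H with J(Rad_g H) ∩ Rad_g H = {0}, so no lightlike hyperplane of an indefinite Hermitian space is radical transversal. -/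
open Module

/-- The `b`-orthogonal complement of a subspace `W`:
`W^⊥ᵇ = {v ∈ V : b(v, w) = 0 for all w ∈ W}`. -/
def orthComp {V : Type*} [AddCommGroup V] [Module ℝ V]
    (b : V →ₗ[ℝ] V →ₗ[ℝ] ℝ) (W : Submodule ℝ V) : Submodule ℝ V where
  carrier := {v : V | ∀ w ∈ W, b v w = 0}
  zero_mem' := by intro w hw; simp
  add_mem' := by
    intro x y hx hy w hw
    simp [map_add, LinearMap.add_apply, hx w hw, hy w hw]
  smul_mem' := by
    intro c x hx w hw
    simp [map_smul, LinearMap.smul_apply, hx w hw]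

/-- In an indefinite Hermitian space (`g(JX, JY) = g(X, Y)`), a
lightlike hyperplane `H` with radical `Rad_g H = H ⊓ H^⊥ᵍ` spanned by `ξ ≠ 0`
satisfies `Jξ ∈ H` and `Jξ ∉ span{ξ}`; consequently `J(Rad_g H)` is a one-dimensional
subspace contained in `H` meeting `Rad_g H` trivially, so no lightlike hyperplane of
an indefinite Hermitian space is radical transversal. -/
theorem statement2 {V : Type*} [AddCommGroup V] [Module ℝ V] [FiniteDimensional ℝ V]
    (J : V →ₗ[ℝ] V) (hJ : ∀ x : V, J (J x) = -x)
    (g : V →ₗ[ℝ] V →ₗ[ℝ] ℝ)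
    (hsymm : ∀ x y : V, g x y = g y x)
    (hnd : ∀ x : V, (∀ y : V, g x y = 0) → x = 0)
    (hHerm : ∀ x y : V, g (J x) (J y) = g x y)
    (H : Submodule ℝ V) (hH : finrank ℝ V = finrank ℝ H + 1)
    (ξ : V) (hξ : ξ ≠ 0)
    (hrad : H ⊓ orthComp g H = Submodule.span ℝ {ξ}) :
    J ξ ∈ H ∧ J ξ ∉ Submodule.span ℝ {ξ} ∧
    Submodule.map J (H ⊓ orthComp g H) ≤ H ∧
    finrank ℝ (Submodule.map J (H ⊓ orthComp g H)) = 1 ∧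
    Submodule.map J (H ⊓ orthComp g H) ⊓ (H ⊓ orthComp g H) = ⊥ := by
  -- ξ is in the radical
  have hξmem : ξ ∈ H ⊓ orthComp g H := by
    rw [hrad]; exact Submodule.mem_span_singleton_self ξ
  have hξH : ξ ∈ H := hξmem.1
  have hξO : ∀ w ∈ H, g ξ w = 0 := hξmem.2
  -- H equals the kernel of g ξ
  have hgξ : g ξ ≠ 0 := by
    intro h
    exact hξ (hnd ξ (fun y => by rw [h]; rfl))
  have hle : H ≤ LinearMap.ker (g ξ) := fun w hw => hξO w hw
  have hker : finrank ℝ (LinearMap.ker (g ξ)) = finrank ℝ H := by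
    have h1 : finrank ℝ (LinearMap.range (g ξ)) = 1 := by
      have : LinearMap.range (g ξ) = ⊤ := by
        obtain ⟨y, hy⟩ : ∃ y, g ξ y ≠ 0 := by
          by_contra h; push_neg at h; exact hgξ (LinearMap.ext h)
        apply Submodule.eq_top_of_finrank_eq
        have : finrank ℝ (LinearMap.range (g ξ)) ≠ 0 := by
          simp only [ne_eq, Submodule.finrank_eq_zero]
          intro h
          rw [LinearMap.range_eq_bot.mp h] at hy; exact hy rfl
        have hle1 : finrank ℝ (LinearMap.range (g ξ)) ≤ 1 := by
          simpa using Submodule.finrank_le (LinearMap.range (g ξ))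
        simp only [finrank_self]
        omega
      rw [this]; simp
    have h2 := LinearMap.finrank_range_add_finrank_ker (g ξ)
    omega
  have hHker : H = LinearMap.ker (g ξ) :=
    Submodule.eq_of_le_of_finrank_le hle (le_of_eq hker)
  -- g ξ (J ξ) = 0
  have hkey : g ξ (J ξ) = 0 := by
    have h1 : g (J (J ξ)) (J ξ) = g (J ξ) ξ := hHerm (J ξ) ξ
    rw [hJ ξ] at h1
    have h2 : g (-ξ) (J ξ) = - g ξ (J ξ) := by simp
    rw [h2, hsymm (J ξ) ξ] at h1
    linarith
  have hJξH : J ξ ∈ H := by rw [hHker]; exact hkey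
  -- J ξ ∉ span ξ
  have hJξns : J ξ ∉ Submodule.span ℝ {ξ} := by
    intro h
    rcases Submodule.mem_span_singleton.mp h with ⟨c, hc⟩
    have h1 : c • J ξ = -ξ := by rw [← map_smul, hc, hJ]
    rw [← hc, smul_smul] at h1
    have : (c * c + 1) • ξ = 0 := by
      rw [add_smul, one_smul, h1]; abel
    rcases smul_eq_zero.mp this with h' | h'
    · nlinarith
    · exact hξ h'
  -- the image
  have hmap : Submodule.map J (H ⊓ orthComp g H) = Submodule.span ℝ {J ξ} := by
    rw [hrad, Submodule.map_span, Set.image_singleton]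
  have hJξne : J ξ ≠ 0 := by
    intro h
    apply hξ
    have := hJ ξ
    rw [h, map_zero] at this
    simpa using this.symm
  refine ⟨hJξH, hJξns, ?_, ?_, ?_⟩
  · rw [hmap]
    exact (Submodule.span_singleton_le_iff_mem _ _).mpr hJξH
  · rw [hmap]
    exact finrank_span_singleton hJξne
  · rw [hmap, hrad]
    rw [Submodule.eq_bot_iff]
    intro x ⟨hx1, hx2⟩
    rcases Submodule.mem_span_singleton.mp hx1 with ⟨a, ha⟩
    rcases Submodule.mem_span_singleton.mp hx2 with ⟨b, hb⟩
    by_cases haz : a = 0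
    · rw [← ha, haz, zero_smul]
    · exfalso
      apply hJξns
      rw [Submodule.mem_span_singleton]
      refine ⟨a⁻¹ * b, ?_⟩
      rw [mul_smul, hb, ← ha, smul_smul, inv_mul_cancel₀ haz, one_smul]
end

section
/- Let V be a finite-dimensional real vector space, J : V → V a linear map with J ∘ J = -id, and g a nondegenerate symmetric bilinear form with g(JX, JY) = -g(X, Y) for all X, Y. Suppose V = S ⊕ span{ξ} ⊕ span{N} is a direct sum decomposition with g(ξ, ξ) = g(N, N) = 0, g(ξ, N) = 1, and g(ξ, w) = g(N, w) = 0 for all w ∈ S. Then Jξ ∈ span{N} if and only if J(S) = S. (This is the pointwise content of Theorem 3.1: a lightlike hyperplane is radical transversal if and only if its screen is holomorphic with respect to J.) -/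
open Module Submodule

/-- pointwise content of Theorem 3.1.  Let `V` carry an almost complex
structure `J` with nondegenerate Norden metric `g`, and let
`V = S ⊕ span{ξ} ⊕ span{N}` be a direct sum decomposition with
`g(ξ,ξ) = g(N,N) = 0`, `g(ξ,N) = 1` and `g(ξ,w) = g(N,w) = 0` for all `w ∈ S`.
Then `Jξ ∈ span{N}` if and only if `J(S) = S`: a lightlike hyperplane is radical
transversal iff its screen is holomorphic with respect to `J`. -/
theorem statement4 {V : Type*} [AddCommGroup V] [Module ℝ V] [FiniteDimensional ℝ V]
    (J : V →ₗ[ℝ] V) (hJ : ∀ x : V, J (J x) = -x)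
    (g : V →ₗ[ℝ] V →ₗ[ℝ] ℝ)
    (hsymm : ∀ x y : V, g x y = g y x)
    (hnd : ∀ x : V, (∀ y : V, g x y = 0) → x = 0)
    (hNorden : ∀ x y : V, g (J x) (J y) = -(g x y))
    (S : Submodule ℝ V) (ξ N : V)
    (hsum : S ⊔ (span ℝ {ξ} ⊔ span ℝ {N}) = ⊤)
    (hd1 : S ⊓ (span ℝ {ξ} ⊔ span ℝ {N}) = ⊥)
    (hd2 : span ℝ {ξ} ⊓ (S ⊔ span ℝ {N}) = ⊥)
    (hd3 : span ℝ {N} ⊓ (S ⊔ span ℝ {ξ}) = ⊥)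
    (hξξ : g ξ ξ = 0) (hNN : g N N = 0) (hξN : g ξ N = 1)
    (horthξ : ∀ w ∈ S, g ξ w = 0) (horthN : ∀ w ∈ S, g N w = 0) :
    J ξ ∈ span ℝ {N} ↔ Submodule.map J S = S := by
  -- J is g-self-adjoint
  have hsa : ∀ x y : V, g (J x) y = g x (J y) := by
    intro x y
    have h := hNorden x (J y)
    rw [hJ y, map_neg] at h
    exact neg_injective h
  have hNξ : g N ξ = 1 := (hsymm N ξ).trans hξN
  have hξ0 : ξ ≠ 0 := by
    intro h; rw [h] at hξN; simp at hξN
  -- decomposition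
  have hdec : ∀ v : V, ∃ s ∈ S, v = s + (g N v) • ξ + (g ξ v) • N := by
    intro v
    have hv : v ∈ S ⊔ (span ℝ {ξ} ⊔ span ℝ {N}) := by rw [hsum]; trivial
    obtain ⟨s, hs, u, hu, hsv⟩ := Submodule.mem_sup.mp hv
    obtain ⟨p, hp, q, hq, huv⟩ := Submodule.mem_sup.mp hu
    obtain ⟨a, rfl⟩ := mem_span_singleton.mp hp
    obtain ⟨b, rfl⟩ := mem_span_singleton.mp hq
    subst huv
    subst hsv
    refine ⟨s, hs, ?_⟩
    have hgN : g N (s + (a • ξ + b • N)) = a := by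
      simp [horthN s hs, hNN, hNξ]
    have hgξ : g ξ (s + (a • ξ + b • N)) = b := by
      simp [horthξ s hs, hξξ, hξN]
    rw [hgN, hgξ]; abel
  have hmemS : ∀ v : V, g N v = 0 → g ξ v = 0 → v ∈ S := by
    intro v h1 h2
    obtain ⟨s, hs, h⟩ := hdec v
    rw [h, h1, h2]
    simpa using hs
  constructor
  · intro hm
    obtain ⟨a, ha⟩ := mem_span_singleton.mp hm
    have ha0 : a ≠ 0 := by
      rintro rfl
      have h := hJ ξ
      rw [← ha] at h
      simp at h
      exact hξ0 h
    have hJN : J N = -(a⁻¹) • ξ := by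
      have h := hJ ξ
      rw [← ha, map_smul] at h
      have : J N = a⁻¹ • (a • J N) := by
        rw [smul_smul, inv_mul_cancel₀ ha0, one_smul]
      rw [this, h, smul_neg, neg_smul]
    have hsub : ∀ w ∈ S, J w ∈ S := by
      intro w hw
      apply hmemS
      · rw [← hsa N w, hJN]
        simp [horthξ w hw]
      · rw [← hsa ξ w, ← ha]
        simp [horthN w hw]
    apply le_antisymm
    · rintro _ ⟨w, hw, rfl⟩
      exact hsub w hw
    · intro w hw
      refine ⟨-(J w), S.neg_mem (hsub w hw), ?_⟩
      rw [map_neg, hJ]; simp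
  · intro hmap
    have hJS : ∀ w ∈ S, J w ∈ S := by
      intro w hw
      rw [← hmap]; exact ⟨w, hw, rfl⟩
    obtain ⟨s, hs, hdecξ⟩ := hdec (J ξ)
    set α := g N (J ξ) with hα
    set β := g ξ (J ξ) with hβ
    have key : ∀ z, g (J ξ) z = g s z + α * g ξ z + β * g N z := by
      intro z
      rw [hdecξ]
      simp [smul_eq_mul]
    have hs0 : s = 0 := by
      apply hnd
      intro y
      obtain ⟨t, ht, hy⟩ := hdec y
      have hgst : g s t = 0 := by
        have h1 : g (J ξ) t = 0 := by
          rw [hsa ξ t]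
          exact horthξ (J t) (hJS t ht)
        have h2 := key t
        rw [h1, horthξ t ht, horthN t ht] at h2
        linarith
      rw [hy]
      simp [hgst, hsymm s ξ, hsymm s N, horthξ s hs, horthN s hs]
    rw [hs0, zero_add] at hdecξ
    have hnorm : g (J ξ) (J ξ) = 0 := by rw [hNorden, hξξ, neg_zero]
    have hαβ : α * β = 0 := by
      have h := key (J ξ)
      rw [hnorm, hs0, ← hβ, ← hα] at h
      simp at h
      linarith [h]
    have hβ0 : β ≠ 0 := by
      intro h0
      rw [h0, zero_smul, add_zero] at hdecξ
      have h := hJ ξ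
      rw [hdecξ, map_smul, hdecξ, smul_smul] at h
      have : (α * α + 1) • ξ = 0 := by
        rw [add_smul, one_smul, h]; abel
      have hco : α * α + 1 ≠ 0 := by nlinarith [mul_self_nonneg α]
      exact hξ0 (by simpa [hco] using (smul_eq_zero.mp this))
    have hα0 : α = 0 := by
      rcases mul_eq_zero.mp hαβ with h | h
      · exact h
      · exact absurd h hβ0
    rw [hα0, zero_smul, zero_add] at hdecξ
    exact mem_span_singleton.mpr ⟨β, hdecξ.symm⟩
end

section
/- Let V be a finite-dimensional real vector space, J : V → V a linear map with J ∘ J = -id, and g a nondegenerate symmetric bilinear form with g(JX, JY) = -g(X, Y) for all X, Y. Let H ⊆ V be a hyperplane whose radical R = Rad_g H = H ∩ H^⊥ᵍ is one-dimensional and which is radical transversal, i.e. J(R) ∩ H = {0}. If S and S′ are two subspaces of H with J(S) = S, J(S′) = S′, H = R ⊕ S and H = R ⊕ S′, then S = S′. (This is the pointwise content of Theorem 4.1: a radical transversal lightlike hypersurface has a unique screen distribution.) -/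
open Module Submodule

theorem screen_le {V : Type*} [AddCommGroup V] [Module ℝ V]
    (J : V →ₗ[ℝ] V) (hJ : ∀ x : V, J (J x) = -x)
    (R H S S' : Submodule ℝ V)
    (hRT : Submodule.map J R ⊓ H = ⊥)
    (hS : S ≤ H) (hS' : S' ≤ H)
    (hJS : Submodule.map J S = S) (hJS' : Submodule.map J S' = S')
    (hsum' : R ⊔ S' = H) :
    S ≤ S' := by
  intro s hs
  have hsH : s ∈ H := hS hs
  rw [← hsum'] at hsH
  obtain ⟨r, hr, t, ht, hrt⟩ := Submodule.mem_sup.mp hsH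
  have hJsS : J s ∈ S := by rw [← hJS]; exact Submodule.mem_map_of_mem hs
  have hJtS' : J t ∈ S' := by rw [← hJS']; exact Submodule.mem_map_of_mem ht
  have hJrH : J r ∈ H := by
    have : J r = J s - J t := by
      rw [← hrt]; simp [map_add]
    rw [this]
    exact H.sub_mem (hS hJsS) (hS' hJtS')
  have hJr0 : J r = 0 := by
    have : J r ∈ Submodule.map J R ⊓ H :=
      ⟨Submodule.mem_map_of_mem hr, hJrH⟩
    rw [hRT] at this
    exact this
  have hr0 : r = 0 := by
    have := hJ r
    rw [hJr0, map_zero] at this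
    exact (neg_eq_zero.mp this.symm)
  rw [← hrt, hr0, zero_add]
  exact ht

/-- pointwise content of Theorem 4.1.  Let `V` carry an almost complex
structure `J` with nondegenerate Norden metric `g`, and let `H` be a hyperplane whose
radical `R = H ⊓ H^⊥ᵍ` is one-dimensional, with `J(R) ∩ H = {0}` (radical transversal).
If `S, S'` are holomorphic screens of `H` (i.e. `J`-invariant complements of `R`
inside `H`), then `S = S'`: the screen distribution is unique. -/
theorem statement5 {V : Type*} [AddCommGroup V] [Module ℝ V] [FiniteDimensional ℝ V]
    (J : V →ₗ[ℝ] V) (hJ : ∀ x : V, J (J x) = -x)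
    (g : V →ₗ[ℝ] V →ₗ[ℝ] ℝ)
    (hsymm : ∀ x y : V, g x y = g y x)
    (hnd : ∀ x : V, (∀ y : V, g x y = 0) → x = 0)
    (hNorden : ∀ x y : V, g (J x) (J y) = -(g x y))
    (H : Submodule ℝ V) (hH : finrank ℝ V = finrank ℝ H + 1)
    (hR : finrank ℝ (H ⊓ orthComp g H : Submodule ℝ V) = 1)
    (hRT : Submodule.map J (H ⊓ orthComp g H) ⊓ H = ⊥)
    (S S' : Submodule ℝ V)
    (hS : S ≤ H) (hS' : S' ≤ H)
    (hJS : Submodule.map J S = S) (hJS' : Submodule.map J S' = S')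
    (hsum : (H ⊓ orthComp g H) ⊔ S = H) (hdisj : (H ⊓ orthComp g H) ⊓ S = ⊥)
    (hsum' : (H ⊓ orthComp g H) ⊔ S' = H) (hdisj' : (H ⊓ orthComp g H) ⊓ S' = ⊥) :
    S = S' := by
  exact le_antisymm
    (screen_le J hJ _ H S S' hRT hS hS' hJS hJS' hsum')
    (screen_le J hJ _ H S' S hRT hS' hS hJS' hJS hsum)
end

section
/- Let V be a finite-dimensional real vector space, J : V → V a linear map with J ∘ J = -id, and g a nondegenerate symmetric bilinear form with g(JX, JY) = -g(X, Y) for all X, Y. Let A : V → V be a linear map satisfying g(J(AX), Y) = g(X, J(AY)) for all X, Y ∈ V. Then A is self-adjoint with respect to g (i.e. g(AX, Y) = g(X, AY) for all X, Y) if and only if A ∘ J = J ∘ A. (This is the pointwise content of the theorem: the shape operator A_N of a radical transversal lightlike hypersurface of a Kaehler manifold with Norden metric is self-conjugate with respect to g if and only if A_N commutes with J.) -/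
/-- pointwise content of Theorem 4.1 on the shape operator.
Let `V` carry an almost complex structure `J` with nondegenerate Norden metric `g`,
and let `A : V → V` be a linear map with `g(J(AX), Y) = g(X, J(AY))` for all `X, Y`.
Then `A` is self-adjoint with respect to `g` iff `A ∘ J = J ∘ A`. -/
theorem statement6 {V : Type*} [AddCommGroup V] [Module ℝ V] [FiniteDimensional ℝ V]
    (J : V →ₗ[ℝ] V) (hJ : ∀ x : V, J (J x) = -x)
    (g : V →ₗ[ℝ] V →ₗ[ℝ] ℝ)
    (hsymm : ∀ x y : V, g x y = g y x)
    (hnd : ∀ x : V, (∀ y : V, g x y = 0) → x = 0)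
    (hNorden : ∀ x y : V, g (J x) (J y) = -(g x y))
    (A : V →ₗ[ℝ] V)
    (hA : ∀ x y : V, g (J (A x)) y = g x (J (A y))) :
    (∀ x y : V, g (A x) y = g x (A y)) ↔ (∀ x : V, A (J x) = J (A x)) := by
  -- J is g-self-adjoint: g (J x) y = g x (J y)
  have hJsa : ∀ x y : V, g (J x) y = g x (J y) := by
    intro x y
    have := hNorden x (J y)
    rw [hJ y] at this
    simpa [neg_eq_iff_eq_neg] using this
  constructor
  · intro hsa x
    apply sub_eq_zero.mp
    apply hnd
    intro y
    have h1 : g (A (J x)) y = g x (J (A y)) := by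
      rw [hsa (J x) y, hJsa x (A y)]
    have h2 : g (J (A x)) y = g x (J (A y)) := hA x y
    simp [h1, h2, hsymm (A (J x) - J (A x)) y]
  · intro hc x y
    have := hA (J x) y
    rw [hc x, hJ (A x)] at this
    have h2 : (g (J x)) (J (A y)) = -(g x (A y)) := hNorden x (A y)
    rw [h2] at this
    simpa [neg_eq_iff_eq_neg] using this
end

section
/- Let V be a finite-dimensional real vector space, J : V → V a linear map with J ∘ J = -id, g a nondegenerate symmetric bilinear form with g(JX, JY) = -g(X, Y) for all X, Y, and g̃(X, Y) = g(JX, Y) the associated metric. For a hyperplane H ⊆ V the following are equivalent: (i) the restriction of g to H is nondegenerate and g(v, Jv) = 0 for every v in the g-orthogonal complement H^⊥ᵍ; (ii) H is lightlike with respect to g̃ (i.e. Rad_g̃ H = H ∩ H^⊥ᵍ̃ ≠ {0}) and radical transversal with respect to g̃ (i.e. J(Rad_g̃ H) ∩ H = {0}). Moreover, in this case Rad_g̃ H = J(H^⊥ᵍ). (This is the pointwise content of Theorem 5.1.) -/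
open Module

lemma mem_orthComp {V : Type*} [AddCommGroup V] [Module ℝ V]
    (b : V →ₗ[ℝ] V →ₗ[ℝ] ℝ) (W : Submodule ℝ V) (v : V) :
    v ∈ orthComp b W ↔ ∀ w ∈ W, b v w = 0 := Iff.rfl

/-- pointwise content of Theorem 5.1.  Let `V` carry an almost
complex structure `J` with nondegenerate Norden metric `g` and associated metric
`g̃ = g(J·, ·)` (here `g ∘ₗ J`).  For a hyperplane `H` the following are equivalent:
(i) `g` restricted to `H` is nondegenerate and `g(v, Jv) = 0` for every `v ∈ H^⊥ᵍ`;
(ii) `H` is lightlike with respect to `g̃` and radical transversal with respect to `g̃`.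
Moreover in this case `Rad_g̃ H = J(H^⊥ᵍ)`. -/
theorem statement9 {V : Type*} [AddCommGroup V] [Module ℝ V] [FiniteDimensional ℝ V]
    (J : V →ₗ[ℝ] V) (hJ : ∀ x : V, J (J x) = -x)
    (g : V →ₗ[ℝ] V →ₗ[ℝ] ℝ)
    (hsymm : ∀ x y : V, g x y = g y x)
    (hnd : ∀ x : V, (∀ y : V, g x y = 0) → x = 0)
    (hNorden : ∀ x y : V, g (J x) (J y) = -(g x y))
    (H : Submodule ℝ V) (hH : finrank ℝ V = finrank ℝ H + 1) :
    (((∀ x ∈ H, (∀ y ∈ H, g x y = 0) → x = 0) ∧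
        (∀ v ∈ orthComp g H, g v (J v) = 0)) ↔
      (H ⊓ orthComp (g ∘ₗ J) H ≠ ⊥ ∧
        Submodule.map J (H ⊓ orthComp (g ∘ₗ J) H) ⊓ H = ⊥)) ∧
    (((∀ x ∈ H, (∀ y ∈ H, g x y = 0) → x = 0) ∧
        (∀ v ∈ orthComp g H, g v (J v) = 0)) →
      H ⊓ orthComp (g ∘ₗ J) H = Submodule.map J (orthComp g H)) := by
  classical
  -- `H` is a proper subspace
  have hHne : H ≠ ⊤ := by
    intro h
    rw [h, finrank_top] at hH
    omega
  obtain ⟨v0, hv0⟩ : ∃ v : V, v ∉ H := by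
    by_contra h
    push_neg at h
    exact hHne (Submodule.eq_top_iff'.mpr h)
  -- a functional with kernel `H`
  have hq : finrank ℝ (V ⧸ H) = 1 := by
    have := Submodule.finrank_quotient_add_finrank H
    omega
  let e : (V ⧸ H) ≃ₗ[ℝ] ℝ :=
    LinearEquiv.ofFinrankEq _ _ (by rw [hq, finrank_self])
  let f : V →ₗ[ℝ] ℝ := (e : (V ⧸ H) →ₗ[ℝ] ℝ) ∘ₗ H.mkQ
  have hfker : ∀ v : V, f v = 0 ↔ v ∈ H := by
    intro v
    simp only [f, LinearMap.comp_apply, Submodule.mkQ_apply, LinearEquiv.coe_coe]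
    rw [LinearEquiv.map_eq_zero_iff, Submodule.Quotient.mk_eq_zero]
  -- the `g`-dual vector ξ of `f`
  have hndB : LinearMap.BilinForm.Nondegenerate g :=
    ⟨hnd, fun y hy => hnd y (fun x => by rw [hsymm]; exact hy x)⟩
  set ξ : V := (LinearMap.BilinForm.toDual g hndB).symm f with hξdef
  have hgξ : ∀ w : V, g ξ w = f w := fun w =>
    LinearMap.BilinForm.apply_toDual_symm_apply (hB := hndB) f w
  have hξoc : ξ ∈ orthComp g H := by
    intro w hw
    rw [hgξ w]
    exact (hfker w).2 hw
  have hξ0 : ξ ≠ 0 := by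
    intro h
    apply hv0
    rw [← hfker v0, ← hgξ v0, h]
    simp
  -- `orthComp g H = span {ξ}`
  have hspanξ : orthComp g H = Submodule.span ℝ {ξ} := by
    apply le_antisymm
    · intro v hv
      have hfv0 : f v0 ≠ 0 := fun h => hv0 ((hfker v0).1 h)
      set x0 : V := (f v0)⁻¹ • v0 with hx0def
      have hfx0 : f x0 = 1 := by
        simp [hx0def, map_smul, inv_mul_cancel₀ hfv0]
      have key : ∀ w : V, g v w = g v x0 * f w := by
        intro w
        have hmem : w - f w • x0 ∈ H := by
          rw [← hfker]
          simp [map_sub, map_smul, hfx0]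
        have h1 : g v (w - f w • x0) = 0 := hv _ hmem
        have h2 : g v w - f w * g v x0 = 0 := by
          simpa [map_sub, map_smul, smul_eq_mul] using h1
        linarith
      have hveq : v = g v x0 • ξ := by
        have h0 : ∀ w : V, g (v - g v x0 • ξ) w = 0 := by
          intro w
          have hcalc : g (v - g v x0 • ξ) w = g v w - g v x0 * f w := by
            simp [map_sub, map_smul, LinearMap.sub_apply, LinearMap.smul_apply,
              hgξ, smul_eq_mul]
          rw [hcalc, key w, sub_self]
        exact sub_eq_zero.mp (hnd _ h0)
      rw [hveq]
      exact Submodule.smul_mem _ _ (Submodule.mem_span_singleton_self ξ)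
    · rw [Submodule.span_le, Set.singleton_subset_iff]
      exact hξoc
  -- `orthComp g̃ H = span {J ξ}`
  have hJξsp : orthComp (g ∘ₗ J) H = Submodule.span ℝ {J ξ} := by
    ext v
    rw [mem_orthComp, Submodule.mem_span_singleton]
    constructor
    · intro hv
      have hJv : J v ∈ orthComp g H := by
        intro w hw
        simpa using hv w hw
      rw [hspanξ] at hJv
      obtain ⟨c, hc⟩ := Submodule.mem_span_singleton.mp hJv
      refine ⟨-c, ?_⟩
      have h2 := congrArg J hc.symm
      rw [hJ v, map_smul] at h2
      rw [neg_smul, ← h2, neg_neg]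
    · rintro ⟨c, rfl⟩
      intro w hw
      simp [LinearMap.comp_apply, map_smul, LinearMap.smul_apply, hJ, map_neg,
        LinearMap.neg_apply, hgξ, (hfker w).2 hw]
  refine ⟨⟨?_, ?_⟩, ?_⟩
  · -- (i) → (ii)
    rintro ⟨hA, hB⟩
    have hfJξ : J ξ ∈ H := by
      rw [← hfker, ← hgξ]
      exact hB ξ hξoc
    have hJξ0 : J ξ ≠ 0 := by
      intro h
      apply hξ0
      have h2 := hJ ξ
      rw [h, map_zero] at h2
      exact neg_eq_zero.mp h2.symm
    constructor
    · intro hbot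
      have hmem : J ξ ∈ H ⊓ orthComp (g ∘ₗ J) H := by
        refine ⟨hfJξ, ?_⟩
        rw [hJξsp]
        exact Submodule.mem_span_singleton_self _
      rw [hbot] at hmem
      exact hJξ0 ((Submodule.mem_bot ℝ).mp hmem)
    · rw [Submodule.eq_bot_iff]
      rintro x ⟨hx1, hx2⟩
      obtain ⟨y, hy, rfl⟩ := Submodule.mem_map.mp hx1
      have hy2 : y ∈ Submodule.span ℝ {J ξ} := by rw [← hJξsp]; exact hy.2
      obtain ⟨c, rfl⟩ := Submodule.mem_span_singleton.mp hy2
      by_cases hc : c = 0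
      · simp [hc]
      · exfalso
        have hxH : J (c • J ξ) ∈ H := hx2
        have hncξH : (-c) • ξ ∈ H := by
          rw [map_smul, hJ] at hxH
          simpa [smul_neg, neg_smul] using hxH
        have hξH : ξ ∈ H := by
          have h3 := H.smul_mem (-c)⁻¹ hncξH
          rwa [smul_smul, inv_mul_cancel₀ (neg_ne_zero.mpr hc), one_smul] at h3
        exact hξ0 (hA ξ hξH (fun y hy => hξoc y hy))
  · -- (ii) → (i)
    rintro ⟨hne, htr⟩
    rw [Submodule.ne_bot_iff] at hne
    obtain ⟨v, ⟨hvH, hvoc⟩, hvne⟩ := hne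
    have hvsp : v ∈ Submodule.span ℝ {J ξ} := by rw [← hJξsp]; exact hvoc
    obtain ⟨c, rfl⟩ := Submodule.mem_span_singleton.mp hvsp
    have hc : c ≠ 0 := by rintro rfl; simp at hvne
    have hfJξ : J ξ ∈ H := by
      have h3 := H.smul_mem c⁻¹ hvH
      rwa [smul_smul, inv_mul_cancel₀ hc, one_smul] at h3
    have hgξJξ : g ξ (J ξ) = 0 := by rw [hgξ]; exact (hfker _).2 hfJξ
    constructor
    · intro x hxH hx
      have hxoc : x ∈ orthComp g H := (mem_orthComp g H x).mpr hx
      rw [hspanξ] at hxoc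
      obtain ⟨a, rfl⟩ := Submodule.mem_span_singleton.mp hxoc
      have hJx : J (a • ξ) ∈ H ⊓ orthComp (g ∘ₗ J) H := by
        rw [map_smul]
        refine ⟨H.smul_mem a hfJξ, ?_⟩
        rw [hJξsp]
        exact Submodule.smul_mem _ a (Submodule.mem_span_singleton_self _)
      have hmem : J (J (a • ξ)) ∈ Submodule.map J (H ⊓ orthComp (g ∘ₗ J) H) :=
        Submodule.mem_map_of_mem hJx
      rw [hJ] at hmem
      have hbot : -(a • ξ) ∈ Submodule.map J (H ⊓ orthComp (g ∘ₗ J) H) ⊓ H :=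
        ⟨hmem, Submodule.neg_mem H hxH⟩
      rw [htr] at hbot
      have h4 := (Submodule.mem_bot ℝ).mp hbot
      simpa [neg_eq_zero] using h4
    · intro w hw
      rw [hspanξ] at hw
      obtain ⟨a, rfl⟩ := Submodule.mem_span_singleton.mp hw
      simp [map_smul, LinearMap.smul_apply, smul_eq_mul, hgξJξ]
  · -- moreover: Rad g̃ H = J(H^⊥ᵍ)
    rintro ⟨hA, hB⟩
    have hfJξ : J ξ ∈ H := by
      rw [← hfker, ← hgξ]
      exact hB ξ hξoc
    rw [hspanξ, hJξsp, Submodule.map_span, Set.image_singleton, inf_eq_right,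
      Submodule.span_le, Set.singleton_subset_iff]
    exact hfJξ
end

section
/- Let V be a finite-dimensional real vector space, J : V → V a linear map with J ∘ J = -id, g a nondegenerate symmetric bilinear form with g(JX, JY) = -g(X, Y) for all X, Y, and g̃(X, Y) = g(JX, Y). Let H ⊆ V be a hyperplane that is lightlike with respect to g̃ with one-dimensional radical spanned by ξ, let S ⊆ H satisfy H = span{ξ} ⊕ S and J(S) = S, and suppose Jξ = bN for some b ≠ 0 with N ∉ H. Then g(w, ξ) = g(w, N) = 0 for every w ∈ S and g(ξ, N) = 0; hence S, span{ξ} and span{N} are mutually orthogonal with respect to g and V = S ⊕ span{ξ} ⊕ span{N} is a g-orthogonal decomposition. -/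
open Module Submodule

/-- Let `V` carry an almost complex structure `J` with nondegenerate
Norden metric `g` and associated metric `g̃ = g(J·, ·)` (here `g ∘ₗ J`).  Let `H` be a
hyperplane, lightlike with respect to `g̃` with radical `span{ξ}` (`ξ ≠ 0`), let
`S ⊆ H` be a holomorphic screen (`H = span{ξ} ⊕ S`, `J(S) = S`), and suppose
`Jξ = b • N` with `b ≠ 0` and `N ∉ H`.  Then `g(w,ξ) = g(w,N) = 0` for every `w ∈ S`
and `g(ξ,N) = 0`; hence `S`, `span{ξ}`, `span{N}` are mutually `g`-orthogonal and
`V = S ⊕ span{ξ} ⊕ span{N}` is a `g`-orthogonal direct sum decomposition. -/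
theorem statement10 {V : Type*} [AddCommGroup V] [Module ℝ V] [FiniteDimensional ℝ V]
    (J : V →ₗ[ℝ] V) (hJ : ∀ x : V, J (J x) = -x)
    (g : V →ₗ[ℝ] V →ₗ[ℝ] ℝ)
    (hsymm : ∀ x y : V, g x y = g y x)
    (hnd : ∀ x : V, (∀ y : V, g x y = 0) → x = 0)
    (hNorden : ∀ x y : V, g (J x) (J y) = -(g x y))
    (H : Submodule ℝ V) (hH : finrank ℝ V = finrank ℝ H + 1)
    (ξ : V) (hξ : ξ ≠ 0)
    (hrad : H ⊓ orthComp (g ∘ₗ J) H = span ℝ {ξ})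
    (S : Submodule ℝ V) (hS : S ≤ H)
    (hsum : span ℝ {ξ} ⊔ S = H) (hdisj : span ℝ {ξ} ⊓ S = ⊥)
    (hJS : Submodule.map J S = S)
    (N : V) (b : ℝ) (hb : b ≠ 0) (hJξ : J ξ = b • N) (hN : N ∉ H) :
    (∀ w ∈ S, g w ξ = 0 ∧ g w N = 0) ∧
    g ξ N = 0 ∧
    S ⊔ (span ℝ {ξ} ⊔ span ℝ {N}) = ⊤ ∧
    S ⊓ (span ℝ {ξ} ⊔ span ℝ {N}) = ⊥ ∧
    span ℝ {ξ} ⊓ (S ⊔ span ℝ {N}) = ⊥ ∧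
    span ℝ {N} ⊓ (S ⊔ span ℝ {ξ}) = ⊥ := by
  -- ξ lies in the radical
  have hξmem : ξ ∈ H ⊓ orthComp (g ∘ₗ J) H := by
    rw [hrad]; exact mem_span_singleton_self ξ
  have hξH : ξ ∈ H := hξmem.1
  have hξorth : ∀ h ∈ H, g (J ξ) h = 0 := fun h hh => hξmem.2 h hh
  -- d • N ∈ H → d = 0
  have hNsc : ∀ d : ℝ, d • N ∈ H → d = 0 := by
    intro d hd
    by_contra hd0
    exact hN (by simpa [smul_smul, inv_mul_cancel₀ hd0] using H.smul_mem d⁻¹ hd)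
  have hJw : ∀ w ∈ S, J w ∈ S := by
    intro w hw
    rw [← hJS]; exact Submodule.mem_map_of_mem hw
  have key : ∀ w ∈ S, g w ξ = 0 ∧ g w N = 0 := by
    intro w hw
    constructor
    · have h1 : g (J ξ) (J w) = 0 := hξorth (J w) (hS (hJw w hw))
      rw [hNorden] at h1
      have : g ξ w = 0 := by linarith
      rw [hsymm]; exact this
    · have h1 : g (J ξ) w = 0 := hξorth w (hS hw)
      rw [hJξ] at h1
      simp only [map_smul, LinearMap.smul_apply, smul_eq_mul] at h1
      have := mul_eq_zero.mp h1
      rcases this with h | h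
      · exact absurd h hb
      · rw [hsymm]; exact h
  have hgξN : g ξ N = 0 := by
    have h1 : g (J ξ) ξ = 0 := hξorth ξ hξH
    rw [hJξ] at h1
    simp only [map_smul, LinearMap.smul_apply, smul_eq_mul] at h1
    rcases mul_eq_zero.mp h1 with h | h
    · exact absurd h hb
    · rw [hsymm]; exact h
  have hSupH : S ⊔ span ℝ {ξ} = H := by rw [sup_comm]; exact hsum
  refine ⟨key, hgξN, ?_, ?_, ?_, ?_⟩
  · -- S ⊔ (span ξ ⊔ span N) = ⊤
    have h1 : S ⊔ (span ℝ {ξ} ⊔ span ℝ {N}) = H ⊔ span ℝ {N} := by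
      rw [← hsum, sup_comm (span ℝ {ξ}) S, sup_assoc]
    rw [h1]
    have hlt : H < H ⊔ span ℝ {N} := by
      refine lt_of_le_of_ne le_sup_left ?_
      intro he
      exact hN (he ▸ (le_sup_right : span ℝ {N} ≤ H ⊔ span ℝ {N}) (Submodule.mem_span_singleton_self N))
    have hrank : finrank ℝ V ≤ finrank ℝ (H ⊔ span ℝ {N} : Submodule ℝ V) := by
      have := Submodule.finrank_lt_finrank_of_lt hlt
      omega
    exact Submodule.eq_top_of_finrank_eq (le_antisymm (Submodule.finrank_le _) hrank)
  · rw [eq_bot_iff]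
    rintro x ⟨hxS, hx2⟩
    rcases Submodule.mem_sup.mp hx2 with ⟨u, hu, v, hv, rfl⟩
    rcases Submodule.mem_span_singleton.mp hu with ⟨c, rfl⟩
    rcases Submodule.mem_span_singleton.mp hv with ⟨d, rfl⟩
    have hdN : d • N ∈ H := by
      have : d • N = (c • ξ + d • N) - c • ξ := by abel
      rw [this]
      exact H.sub_mem (hS hxS) (H.smul_mem c hξH)
    have hd0 : d = 0 := hNsc d hdN
    subst hd0
    simp only [zero_smul, add_zero] at hxS ⊢
    have : c • ξ ∈ span ℝ {ξ} ⊓ S := ⟨Submodule.smul_mem _ c (mem_span_singleton_self ξ), hxS⟩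
    rw [hdisj] at this
    exact this
  · rw [eq_bot_iff]
    rintro x ⟨hx1, hx2⟩
    rcases Submodule.mem_span_singleton.mp hx1 with ⟨c, rfl⟩
    rcases Submodule.mem_sup.mp hx2 with ⟨u, hu, v, hv, he⟩
    rcases Submodule.mem_span_singleton.mp hv with ⟨d, rfl⟩
    have hdN : d • N ∈ H := by
      have : d • N = c • ξ - u := by rw [← he]; abel
      rw [this]
      exact H.sub_mem (H.smul_mem c hξH) (hS hu)
    have hd0 : d = 0 := hNsc d hdN
    subst hd0
    simp only [zero_smul, add_zero] at he
    have : c • ξ ∈ span ℝ {ξ} ⊓ S := ⟨Submodule.smul_mem _ c (mem_span_singleton_self ξ), he ▸ hu⟩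
    rw [hdisj] at this
    exact this
  · rw [eq_bot_iff]
    rintro x ⟨hx1, hx2⟩
    rcases Submodule.mem_span_singleton.mp hx1 with ⟨d, rfl⟩
    rw [hSupH] at hx2
    have hd0 : d = 0 := hNsc d hx2
    subst hd0
    simp
end

section
/- Let V be a real vector space of dimension 2n + 1 with an almost contact structure with B-metric (φ, ξ₀, η, g), i.e. φ²X = -X + η(X)ξ₀, η(ξ₀) = 1, g(φX, φY) = -g(X, Y) + η(X)η(Y) for all X, Y, and assume g is nondegenerate. Then g has signature (n + 1, n): there is a g-orthogonal direct sum decomposition V = P ⊕ Q with dim P = n + 1, dim Q = n, g positive definite on P and negative definite on Q. -/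
open Module

/-- Let `V` be a `(2n+1)`-dimensional real vector space with an
almost contact structure with B-metric `(φ, ξ₀, η, g)`, `g` nondegenerate.  Then `g`
has signature `(n + 1, n)`: there is a `g`-orthogonal direct sum decomposition
`V = P ⊕ Q` with `dim P = n + 1`, `dim Q = n`, `g` positive definite on `P` and
negative definite on `Q`. -/
theorem statement12 {V : Type*} [AddCommGroup V] [Module ℝ V] [FiniteDimensional ℝ V]
    (n : ℕ) (hdim : finrank ℝ V = 2 * n + 1)
    (φ : V →ₗ[ℝ] V) (ξ₀ : V) (η : V →ₗ[ℝ] ℝ)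
    (g : V →ₗ[ℝ] V →ₗ[ℝ] ℝ)
    (hsymm : ∀ x y : V, g x y = g y x)
    (hnd : ∀ x : V, (∀ y : V, g x y = 0) → x = 0)
    (hφ : ∀ x : V, φ (φ x) = -x + η x • ξ₀)
    (hη : η ξ₀ = 1)
    (hg : ∀ x y : V, g (φ x) (φ y) = -(g x y) + η x * η y) :
    ∃ P Q : Submodule ℝ V,
      P ⊓ Q = ⊥ ∧ P ⊔ Q = ⊤ ∧
      finrank ℝ P = n + 1 ∧ finrank ℝ Q = n ∧
      (∀ p ∈ P, p ≠ 0 → 0 < g p p) ∧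
      (∀ q ∈ Q, q ≠ 0 → g q q < 0) ∧
      (∀ p ∈ P, ∀ q ∈ Q, g p q = 0) := by
  -- basic consequences of the structure equations
  have hξ : ξ₀ ≠ 0 := by
    intro h; rw [h, map_zero] at hη; exact one_ne_zero hη.symm
  have hφξ : φ ξ₀ = 0 := by
    have h1 : φ (φ ξ₀) = 0 := by rw [hφ, hη, one_smul, neg_add_cancel]
    have h2 := hφ (φ ξ₀)
    rw [h1, map_zero] at h2
    have h3 : φ ξ₀ = η (φ ξ₀) • ξ₀ := by
      have h := h2.symm
      rwa [neg_add_eq_zero] at h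
    have h4 : (0 : V) = (η (φ ξ₀) * η (φ ξ₀)) • ξ₀ := by
      calc (0 : V) = φ (φ ξ₀) := h1.symm
        _ = φ (η (φ ξ₀) • ξ₀) := by rw [← h3]
        _ = η (φ ξ₀) • φ ξ₀ := by rw [map_smul]
        _ = η (φ ξ₀) • (η (φ ξ₀) • ξ₀) := by rw [← h3]
        _ = (η (φ ξ₀) * η (φ ξ₀)) • ξ₀ := by rw [smul_smul]
    have h5 : η (φ ξ₀) = 0 := by
      rcases smul_eq_zero.1 h4.symm with h | h
      · exact mul_self_eq_zero.1 h
      · exact absurd h hξ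
    rw [h3, h5, zero_smul]
  have hηφ : ∀ x : V, η (φ x) = 0 := by
    intro x
    have h1 := hφ (φ x)
    have h2 : φ (φ (φ x)) = -φ x := by
      rw [hφ x, map_add, map_neg, map_smul, hφξ, smul_zero, add_zero]
    rw [h2] at h1
    have h3 : η (φ x) • ξ₀ = 0 := by
      have := h1
      rw [← sub_eq_zero] at this
      simpa [sub_eq_iff_eq_add] using this
    rcases smul_eq_zero.1 h3 with h | h
    · exact h
    · exact absurd h hξ
  have hgξ : ∀ x : V, g x ξ₀ = η x := by
    intro x
    have := hg x ξ₀
    rw [hφξ, map_zero, hη, mul_one] at this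
    linarith
  have hgξξ : g ξ₀ ξ₀ = 1 := by rw [hgξ, hη]
  have hkerφη : ∀ w : V, η w = 0 → φ w = 0 → w = 0 := by
    intro w h1 h2
    have := hφ w
    rw [h2, map_zero, h1, zero_smul, add_zero] at this
    exact neg_eq_zero.1 this.symm
  have hkerdim : finrank ℝ (LinearMap.ker η) = 2 * n := by
    have h1 := LinearMap.finrank_range_add_finrank_ker η
    have h2 : LinearMap.range η = ⊤ := by
      rw [LinearMap.range_eq_top]
      intro c; exact ⟨c • ξ₀, by simp [hη]⟩
    rw [h2, finrank_top, finrank_self, hdim] at h1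
    omega
  -- positive and negative subspaces together have dimension ≤ 2n+1
  have dimle : ∀ A B : Submodule ℝ V, (∀ x ∈ A, x ≠ 0 → 0 < g x x) →
      (∀ x ∈ B, x ≠ 0 → g x x < 0) →
      finrank ℝ A + finrank ℝ B ≤ 2 * n + 1 := by
    intro A B hA hB
    have hd : A ⊓ B = ⊥ := by
      rw [eq_bot_iff]
      rintro x ⟨hx1, hx2⟩
      rcases eq_or_ne x 0 with h | h
      · simp [h]
      · exact absurd (hB x hx2 h) (not_lt.2 (le_of_lt (hA x hx1 h)))
    have h1 := Submodule.finrank_sup_add_finrank_inf_eq A B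
    rw [hd, finrank_bot, add_zero] at h1
    rw [← h1]
    calc finrank ℝ ↥(A ⊔ B) ≤ finrank ℝ V := Submodule.finrank_le _
      _ = 2 * n + 1 := hdim
  -- φ preserves dimension on subspaces of ker η
  have dimmap : ∀ W : Submodule ℝ V, W ≤ LinearMap.ker η →
      finrank ℝ (W.map φ) = finrank ℝ W := by
    intro W hW
    have h1 := LinearMap.finrank_range_add_finrank_ker (φ.domRestrict W)
    have hker : LinearMap.ker (φ.domRestrict W) = ⊥ := by
      rw [eq_bot_iff]
      rintro ⟨w, hw⟩ hk
      simp only [LinearMap.mem_ker, LinearMap.domRestrict_apply] at hk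
      have hw0 := hkerφη w (hW hw) hk
      simpa [Submodule.mem_bot, Submodule.mk_eq_zero] using hw0
    rw [hker, finrank_bot, add_zero, LinearMap.range_domRestrict] at h1
    exact h1
  -- intersecting with ker η loses at most one dimension
  have dimcap : ∀ W : Submodule ℝ V,
      finrank ℝ W ≤ finrank ℝ (W ⊓ LinearMap.ker η : Submodule ℝ V) + 1 := by
    intro W
    have h1 := Submodule.finrank_sup_add_finrank_inf_eq W (LinearMap.ker η)
    have h2 : finrank ℝ ↥(W ⊔ LinearMap.ker η) ≤ 2 * n + 1 := by
      rw [← hdim]; exact Submodule.finrank_le _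
    omega
  -- any positive definite subspace has dimension ≤ n+1
  have posbound : ∀ A : Submodule ℝ V, (∀ x ∈ A, x ≠ 0 → 0 < g x x) →
      finrank ℝ A ≤ n + 1 := by
    intro A hA
    set W := A ⊓ LinearMap.ker η with hWdef
    have hWker : W ≤ LinearMap.ker η := inf_le_right
    have hneg : ∀ x ∈ W.map φ, x ≠ 0 → g x x < 0 := by
      rintro x hx hx0
      obtain ⟨w, hw, rfl⟩ := hx
      have hw0 : w ≠ 0 := fun h => hx0 (by rw [h, map_zero])
      have hη0 : η w = 0 := hWker hw
      have h1 := hg w w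
      rw [hη0, mul_zero, add_zero] at h1
      have h2 := hA w hw.1 hw0
      linarith
    have h1 := dimle A (W.map φ) hA hneg
    rw [dimmap W hWker] at h1
    have h2 := dimcap A
    rw [← hWdef] at h2
    omega
  -- any negative definite subspace has dimension ≤ n
  have negbound : ∀ B : Submodule ℝ V, (∀ x ∈ B, x ≠ 0 → g x x < 0) →
      finrank ℝ B ≤ n := by
    intro B hB
    set W := B ⊓ LinearMap.ker η with hWdef
    have hWker : W ≤ LinearMap.ker η := inf_le_right
    set P' := (ℝ ∙ ξ₀) ⊔ W.map φ with hP'def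
    have hpos : ∀ x ∈ P', x ≠ 0 → 0 < g x x := by
      intro x hx hx0
      obtain ⟨y, hy, z, hz, rfl⟩ := Submodule.mem_sup.1 hx
      obtain ⟨a, rfl⟩ := Submodule.mem_span_singleton.1 hy
      obtain ⟨w, hw, rfl⟩ := hz
      have hηw : η w = 0 := hWker hw
      have hgφ : g (φ w) ξ₀ = 0 := by rw [hgξ (φ w), hηφ]
      have hgφ' : g ξ₀ (φ w) = 0 := by rw [hsymm]; exact hgφ
      have hgww := hg w w
      rw [hηw, mul_zero, add_zero] at hgww
      have expand : g (a • ξ₀ + φ w) (a • ξ₀ + φ w) =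
          a * a * g ξ₀ ξ₀ + a * g ξ₀ (φ w) + a * g (φ w) ξ₀ + g (φ w) (φ w) := by
        simp only [map_add, map_smul, LinearMap.add_apply, LinearMap.smul_apply, smul_eq_mul]
        ring
      rw [expand, hgξξ, hgφ, hgφ', hgww]
      rcases eq_or_ne w 0 with h | h
      · have ha : a ≠ 0 := by
          intro h0; apply hx0; rw [h, h0, map_zero, zero_smul, add_zero]
        rw [h, map_zero]
        have := mul_pos_of_neg_of_neg (neg_lt_zero.2 (abs_pos.2 ha)) (neg_lt_zero.2 (abs_pos.2 ha))
        nlinarith [mul_self_pos.2 ha]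
      · have := hB w hw.1 h
        nlinarith [mul_self_nonneg a]
    have hdisj : (ℝ ∙ ξ₀) ⊓ W.map φ = ⊥ := by
      rw [eq_bot_iff]
      rintro x ⟨hx1, hx2⟩
      obtain ⟨a, rfl⟩ := Submodule.mem_span_singleton.1 hx1
      obtain ⟨w, hw, heq⟩ := hx2
      have ha : a = 0 := by
        have := congrArg η heq
        rw [hηφ, map_smul, hη, smul_eq_mul, mul_one] at this
        exact this.symm
      simp [ha]
    have hd1 : finrank ℝ ↥P' + 0 = 1 + finrank ℝ (W.map φ) := by
      have h1 := Submodule.finrank_sup_add_finrank_inf_eq (ℝ ∙ ξ₀) (W.map φ)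
      rw [hdisj, finrank_bot, finrank_span_singleton hξ] at h1
      rw [hP'def]; omega
    have h1 := dimle P' B hpos hB
    rw [dimmap W hWker] at hd1
    have h2 := dimcap B
    rw [← hWdef] at h2
    omega
  -- orthogonal basis
  have hsymm' : g.IsSymm := ⟨fun x y => hsymm x y⟩
  obtain ⟨v, hv⟩ := LinearMap.BilinForm.exists_orthogonal_basis hsymm'
  have hdne : ∀ i, g (v i) (v i) ≠ 0 := fun i =>
    LinearMap.IsOrthoᵢ.not_isOrtho_basis_self_of_separatingLeft hv hnd i
  set S : Set (Fin (finrank ℝ V)) := {i | 0 < g (v i) (v i)} with hSdef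
  set P := Submodule.span ℝ (v '' S) with hPdef
  set Q := Submodule.span ℝ (v '' Sᶜ) with hQdef
  -- key diagonalization formula
  have key : ∀ x y : V, g x y = ∑ i, v.repr x i * v.repr y i * g (v i) (v i) := by
    intro x y
    conv_lhs => rw [← v.sum_repr x, ← v.sum_repr y]
    simp only [map_sum, map_smul, LinearMap.sum_apply, LinearMap.smul_apply, smul_eq_mul]
    refine Finset.sum_congr rfl fun j _ => ?_
    rw [Finset.sum_eq_single j]
    · ring
    · intro i _ hi
      rw [hv hi, mul_zero]
    · intro h; exact absurd (Finset.mem_univ j) h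
  have hP : ∀ x ∈ P, x ≠ 0 → 0 < g x x := by
    intro x hx hx0
    have hsupp : ↑(v.repr x).support ⊆ S := v.mem_span_image.1 hx
    rw [key]
    apply Finset.sum_pos'
    · intro i _
      by_cases h : v.repr x i = 0
      · simp [h]
      · have hd : 0 < g (v i) (v i) := hsupp (Finsupp.mem_support_iff.2 h)
        exact mul_nonneg (mul_self_nonneg _) hd.le
    · obtain ⟨i, hi⟩ : ∃ i, v.repr x i ≠ 0 := by
        by_contra h
        push_neg at h
        exact hx0 (by simpa using (v.repr.map_eq_zero_iff).1 (Finsupp.ext h))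
      have hd : 0 < g (v i) (v i) := hsupp (Finsupp.mem_support_iff.2 hi)
      exact ⟨i, Finset.mem_univ i, mul_pos (mul_self_pos.2 hi) hd⟩
  have hQ : ∀ x ∈ Q, x ≠ 0 → g x x < 0 := by
    intro x hx hx0
    have hsupp : ↑(v.repr x).support ⊆ Sᶜ := v.mem_span_image.1 hx
    rw [key]
    have hlt : 0 < ∑ i, -(v.repr x i * v.repr x i * g (v i) (v i)) := by
      apply Finset.sum_pos'
      · intro i _
        by_cases h : v.repr x i = 0
        · simp [h]
        · have hd : g (v i) (v i) < 0 := by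
            have hmem : i ∈ Sᶜ := hsupp (Finsupp.mem_support_iff.2 h)
            have : ¬(0 < g (v i) (v i)) := hmem
            exact lt_of_le_of_ne (not_lt.1 this) (hdne i)
          have := mul_pos (mul_self_pos.2 h) (neg_pos.2 hd)
          nlinarith
      · obtain ⟨i, hi⟩ : ∃ i, v.repr x i ≠ 0 := by
          by_contra h
          push_neg at h
          exact hx0 (by simpa using (v.repr.map_eq_zero_iff).1 (Finsupp.ext h))
        have hd : g (v i) (v i) < 0 := by
          have hmem : i ∈ Sᶜ := hsupp (Finsupp.mem_support_iff.2 hi)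
          have : ¬(0 < g (v i) (v i)) := hmem
          exact lt_of_le_of_ne (not_lt.1 this) (hdne i)
        refine ⟨i, Finset.mem_univ i, ?_⟩
        have := mul_pos (mul_self_pos.2 hi) (neg_pos.2 hd)
        nlinarith
    rw [Finset.sum_neg_distrib] at hlt
    linarith
  have hPQ : ∀ p ∈ P, ∀ q ∈ Q, g p q = 0 := by
    intro p hp q hq
    have hsp : ↑(v.repr p).support ⊆ S := v.mem_span_image.1 hp
    have hsq : ↑(v.repr q).support ⊆ Sᶜ := v.mem_span_image.1 hq
    rw [key]
    apply Finset.sum_eq_zero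
    intro i _
    by_cases h1 : v.repr p i = 0
    · simp [h1]
    by_cases h2 : v.repr q i = 0
    · simp [h2]
    exact absurd (hsp (Finsupp.mem_support_iff.2 h1))
      (hsq (Finsupp.mem_support_iff.2 h2))
  have hsup : P ⊔ Q = ⊤ := by
    rw [hPdef, hQdef, ← Submodule.span_union, ← Set.image_union, Set.union_compl_self,
      Set.image_univ, v.span_eq]
  have hinf : P ⊓ Q = ⊥ := by
    rw [eq_bot_iff]
    rintro x ⟨hx1, hx2⟩
    rcases eq_or_ne x 0 with h | h
    · simp [h]
    · exact absurd (hQ x hx2 h) (not_lt.2 (le_of_lt (hP x hx1 h)))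
  have hsum : finrank ℝ P + finrank ℝ Q = 2 * n + 1 := by
    have h1 := Submodule.finrank_sup_add_finrank_inf_eq P Q
    rw [hsup, hinf, finrank_bot, finrank_top, add_zero, hdim] at h1
    omega
  have h1 := posbound P hP
  have h2 := negbound Q hQ
  exact ⟨P, Q, hinf, hsup, by omega, by omega, hP, hQ, hPQ⟩
end
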